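/- Let f(θ) = ⟨0|U(θ)† M U(θ)|0⟩ where U(θ) = A exp(-iθG/2) B for fixed unitaries A, B and a Hermitian G with G² = I, and Hermitian M. Then there exist real numbers α, β, γ such that f(θ) = α·cos(θ - β) + γ for all θ. -/

import Mathlib

set_option maxHeartbeats 1000000

open scoped Matrix
open NormedSpace

/-- exp of `(-t i) • g` for an involution `g`. -/
lemma exp_neg_smul_I_of_sq_eq_one {A : Type*} [NormedRing A] [NormedAlgebra ℂ A]
    [CompleteSpace A] (g : A) (hg : g ^ 2 = 1) (t : ℝ) :
    exp ((-(t : ℂ) * Complex.I) • g) =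
      (Real.cos t : ℂ) • (1 : A) - ((Real.sin t : ℂ) * Complex.I) • g := by
  set z : ℂ := -(t : ℂ) * Complex.I with hzdef
  have hz2 : z ^ 2 = -((t : ℂ) ^ 2) := by
    rw [hzdef, mul_pow, Complex.I_sq]; ring
  have hzeven : ∀ k : ℕ, z ^ (2 * k) = (-1) ^ k * (t : ℂ) ^ (2 * k) := by
    intro k
    rw [pow_mul, hz2, neg_pow, pow_mul]
  rw [exp_eq_tsum ℂ]
  refine HasSum.tsum_eq ?_
  have he : HasSum (fun k : ℕ => ((Nat.factorial (2 * k) : ℂ))⁻¹ • (z • g) ^ (2 * k))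
      ((Real.cos t : ℂ) • (1 : A)) := by
    have h := (Complex.hasSum_cos (t : ℂ)).smul_const (1 : A)
    rw [Complex.ofReal_cos]
    convert h using 2 with k
    rw [smul_pow, pow_mul g, hg, one_pow, smul_smul]
    congr 1
    rw [hzeven]
    ring
  have ho : HasSum (fun k : ℕ => ((Nat.factorial (2 * k + 1) : ℂ))⁻¹ • (z • g) ^ (2 * k + 1))
      (-(((Real.sin t : ℂ) * Complex.I)) • g) := by
    have h := (((Complex.hasSum_sin (t : ℂ)).mul_right Complex.I).neg).smul_const g
    rw [Complex.ofReal_sin]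
    convert h using 2 with k
    rw [smul_pow, pow_succ g, pow_mul g, hg, one_pow, one_mul, smul_smul]
    congr 1
    rw [pow_succ z, hzeven, hzdef]
    ring
  rw [show (Real.cos t : ℂ) • (1 : A) - ((Real.sin t : ℂ) * Complex.I) • g
      = (Real.cos t : ℂ) • (1 : A) + (-((Real.sin t : ℂ) * Complex.I)) • g by
    rw [neg_smul, sub_eq_add_neg]]
  exact HasSum.even_add_odd he ho

/-- The quadratic form of a Hermitian matrix is real. -/
lemma herm_dotProduct_real {n : ℕ} {H : Matrix (Fin n) (Fin n) ℂ} (hH : H.IsHermitian)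
    (v : Fin n → ℂ) :
    star v ⬝ᵥ H.mulVec v = (((star v ⬝ᵥ H.mulVec v).re : ℝ) : ℂ) := by
  have hst : (starRingEnd ℂ) (star v ⬝ᵥ H.mulVec v) = star v ⬝ᵥ H.mulVec v := calc
    (starRingEnd ℂ) (star v ⬝ᵥ H.mulVec v)
      = star (star v ⬝ᵥ H.mulVec v) := rfl
    _ = star (H.mulVec v) ⬝ᵥ v := by rw [← Matrix.star_dotProduct]
    _ = (Matrix.vecMul (star v) Hᴴ) ⬝ᵥ v := by rw [Matrix.star_mulVec]
    _ = star v ⬝ᵥ Hᴴ.mulVec v := (Matrix.dotProduct_mulVec _ _ _).symm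
    _ = star v ⬝ᵥ H.mulVec v := by rw [hH.eq]
  exact (Complex.conj_eq_iff_re.mp hst).symm

theorem pqc_expectation_sinusoidal (n : ℕ)
    (A B G M : Matrix (Fin n) (Fin n) ℂ)
    (hA : A ∈ Matrix.unitaryGroup (Fin n) ℂ) (hB : B ∈ Matrix.unitaryGroup (Fin n) ℂ)
    (hG : G.IsHermitian) (hG2 : G ^ 2 = 1) (hM : M.IsHermitian)
    (v : Fin n → ℂ)
    (U : ℝ → Matrix (Fin n) (Fin n) ℂ)
    (hU : ∀ θ : ℝ, U θ = A * NormedSpace.exp ((-(θ / 2) * Complex.I) • G) * B)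
    (f : ℝ → ℂ)
    (hf : ∀ θ : ℝ, f θ = star v ⬝ᵥ ((U θ)ᴴ * M * U θ).mulVec v) :
    ∃ α β γ : ℝ, ∀ θ : ℝ, f θ = (α * Real.cos (θ - β) + γ : ℝ) := by
  letI : NormedRing (Matrix (Fin n) (Fin n) ℂ) := Matrix.linftyOpNormedRing
  letI : NormedAlgebra ℂ (Matrix (Fin n) (Fin n) ℂ) := Matrix.linftyOpNormedAlgebra
  set N : Matrix (Fin n) (Fin n) ℂ := Aᴴ * M * A with hN
  have hNh : Nᴴ = N := by
    rw [hN, Matrix.conjTranspose_mul, Matrix.conjTranspose_mul, hM.eq,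
      Matrix.conjTranspose_conjTranspose, Matrix.mul_assoc]
  set P : Matrix (Fin n) (Fin n) ℂ := Bᴴ * N * B with hP
  set Q : Matrix (Fin n) (Fin n) ℂ := Bᴴ * (G * N * G) * B with hQ
  set K : Matrix (Fin n) (Fin n) ℂ := Bᴴ * (Complex.I • (G * N - N * G)) * B with hK
  have hPh : P.IsHermitian := by
    unfold Matrix.IsHermitian
    rw [hP, Matrix.conjTranspose_mul, Matrix.conjTranspose_mul, hNh,
      Matrix.conjTranspose_conjTranspose]
    simp only [hN, Matrix.mul_assoc]
  have hQh : Q.IsHermitian := by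
    unfold Matrix.IsHermitian
    rw [hQ, Matrix.conjTranspose_mul, Matrix.conjTranspose_mul,
      Matrix.conjTranspose_conjTranspose, Matrix.conjTranspose_mul, Matrix.conjTranspose_mul,
      hNh, hG.eq]
    simp only [hN, Matrix.mul_assoc]
  have hKinner : (Complex.I • (G * N - N * G))ᴴ = Complex.I • (G * N - N * G) := by
    simp only [hN, Matrix.conjTranspose_smul, Matrix.conjTranspose_sub,
      Matrix.conjTranspose_mul, Matrix.conjTranspose_conjTranspose, hM.eq, hG.eq,
      Complex.star_def, Complex.conj_I, neg_smul, ← smul_neg, neg_sub, Matrix.mul_assoc]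
  have hKh : K.IsHermitian := by
    unfold Matrix.IsHermitian
    rw [hK, Matrix.conjTranspose_mul, Matrix.conjTranspose_mul,
      Matrix.conjTranspose_conjTranspose, hKinner]
    simp only [hN, Matrix.mul_assoc]
  -- quadratic form values
  set p : ℝ := (star v ⬝ᵥ P.mulVec v).re with hp
  set q : ℝ := (star v ⬝ᵥ Q.mulVec v).re with hq
  set k : ℝ := (star v ⬝ᵥ K.mulVec v).re with hk
  -- main pointwise formula
  have key : ∀ θ : ℝ, f θ = ((p * Real.cos (θ / 2) ^ 2 + k * (Real.cos (θ / 2) * Real.sin (θ / 2))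
      + q * Real.sin (θ / 2) ^ 2 : ℝ) : ℂ) := by
    intro θ
    have hexp : NormedSpace.exp ((-(θ / 2 : ℝ) * Complex.I : ℂ) • G) =
        (Real.cos (θ / 2) : ℂ) • (1 : Matrix (Fin n) (Fin n) ℂ)
          - ((Real.sin (θ / 2) : ℂ) * Complex.I) • G := by
      exact exp_neg_smul_I_of_sq_eq_one G hG2 (θ / 2)
    set c : ℂ := (Real.cos (θ / 2) : ℂ) with hc
    set s : ℂ := (Real.sin (θ / 2) : ℂ) with hs
    have hUθ : U θ = A * (c • 1 - (s * Complex.I) • G) * B := by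
      rw [hU θ, show ((-(↑θ / 2) * Complex.I : ℂ)) = (-((θ / 2 : ℝ) : ℂ) * Complex.I) by
        push_cast; ring, hexp]
    have hE : (c • (1 : Matrix (Fin n) (Fin n) ℂ) - (s * Complex.I) • G)ᴴ =
        c • 1 + (s * Complex.I) • G := by
      rw [Matrix.conjTranspose_sub, Matrix.conjTranspose_smul, Matrix.conjTranspose_smul,
        Matrix.conjTranspose_one, hG.eq,
        show star c = c by rw [hc]; exact Complex.conj_ofReal _,
        show star (s * Complex.I) = -(s * Complex.I) by
          rw [hs, star_mul', RCLike.star_def, Complex.conj_I, Complex.conj_ofReal]; ring,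
        neg_smul, sub_neg_eq_add]
    have hmat : (U θ)ᴴ * M * U θ = (c ^ 2) • P + (c * s) • K + (s ^ 2) • Q := by
      rw [hUθ, Matrix.conjTranspose_mul, Matrix.conjTranspose_mul, hE]
      simp only [hP, hQ, hK, hN, Matrix.mul_add,
        Matrix.add_mul, Matrix.mul_sub, Matrix.sub_mul, Matrix.mul_smul, Matrix.smul_mul,
        Matrix.mul_one, Matrix.one_mul, smul_smul, smul_sub, smul_add, mul_assoc]
      match_scalars <;>
        first
          | ring1
          | linear_combination (-(s ^ 2) : ℂ) * Complex.I_sq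
          | linear_combination (s ^ 2 : ℂ) * Complex.I_sq
    rw [hf θ, hmat]
    have hPr := herm_dotProduct_real hPh v
    have hQr := herm_dotProduct_real hQh v
    have hKr := herm_dotProduct_real hKh v
    simp only [Matrix.add_mulVec, Matrix.smul_mulVec, dotProduct_add,
      dotProduct_smul, smul_eq_mul]
    rw [hPr, hQr, hKr, ← hp, ← hq, ← hk, hc, hs]
    push_cast
    ring
  -- convert to sinusoid
  set a : ℝ := (p - q) / 2 with ha
  set b : ℝ := k / 2 with hb
  set z : ℂ := (a : ℂ) + (b : ℂ) * Complex.I with hz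
  refine ⟨‖z‖, z.arg, (p + q) / 2, fun θ => ?_⟩
  rw [key θ, Complex.ofReal_inj]
  have h1 : z.re = a := by simp [hz]
  have h2 : z.im = b := by simp [hz]
  have habs : (‖z‖) * Real.cos (θ - z.arg) = a * Real.cos θ + b * Real.sin θ := by
    rw [Real.cos_sub]
    calc ‖z‖ * (Real.cos θ * Real.cos z.arg + Real.sin θ * Real.sin z.arg)
        = (‖z‖ * Real.cos z.arg) * Real.cos θ
          + (‖z‖ * Real.sin z.arg) * Real.sin θ := by ring
      _ = a * Real.cos θ + b * Real.sin θ := by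
          rw [Complex.norm_mul_cos_arg, Complex.norm_mul_sin_arg, h1, h2]
  have hcos : Real.cos θ = Real.cos (θ / 2) ^ 2 - Real.sin (θ / 2) ^ 2 := by
    rw [← Real.cos_two_mul']
    congr 1
    ring
  have hsin : Real.sin θ = 2 * Real.sin (θ / 2) * Real.cos (θ / 2) := by
    rw [← Real.sin_two_mul]
    congr 1
    ring
  have hone : Real.sin (θ / 2) ^ 2 + Real.cos (θ / 2) ^ 2 = 1 := Real.sin_sq_add_cos_sq _
  rw [habs, hcos, hsin, ha, hb]
  linear_combination ((p + q) / 2) * hone
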